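/- arXiv:0705.4060 — 3 statements merged into one kernel-verified Lean document; each statement's English description precedes it below -/
import Mathlib

section
/- With notation as above, for every continuous f : X → ℂ and every n ∈ ℕ, (S*)^n ∘ M_f ∘ S^n = M_{ℒ_p^n(f)} as operators on L²(μ), where M_f is multiplication by f. -/
open MeasureTheory Finset

/-- The full shift space `{1,…,k}^ℕ`, modeled as `ℕ → Fin k`. -/
abbrev ShiftSpace (k : ℕ) := ℕ → Fin k

/-- The left shift `T`. -/
def shiftT {k : ℕ} (x : ShiftSpace k) : ShiftSpace k := fun n => x (n + 1)

/-- Prepending a symbol: the `k` preimages of `x` under the shift are `consS i x`. -/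
def consS {k : ℕ} (i : Fin k) (x : ShiftSpace k) : ShiftSpace k :=
  fun n => Nat.casesOn n i x

/-- The Ruelle operator `ℒ_p f (x) = ∑_{T z = x} p z · f z` on complex functions. -/
noncomputable def ruelleOp {k : ℕ} (p : ShiftSpace k → ℝ) (f : ShiftSpace k → ℂ) :
    ShiftSpace k → ℂ :=
  fun x => ∑ i : Fin k, (p (consS i x) : ℂ) * f (consS i x)

/-- The Ruelle operator on real functions. -/
noncomputable def ruelleOpR {k : ℕ} (p : ShiftSpace k → ℝ) (f : ShiftSpace k → ℝ) :
    ShiftSpace k → ℝ :=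
  fun x => ∑ i : Fin k, p (consS i x) * f (consS i x)

/-- Hölder continuity with respect to the standard ultrametric on the shift space:
`|f x - f y| ≤ C · 2^{-α n}` whenever `x` and `y` agree on the first `n` coordinates. -/
def HolderSeq {k : ℕ} (f : ShiftSpace k → ℝ) : Prop :=
  ∃ C α : ℝ, 0 < α ∧ ∀ x y : ShiftSpace k, ∀ n : ℕ,
    (∀ m < n, x m = y m) → |f x - f y| ≤ C * (2 : ℝ) ^ (-(α * n))

/-- `λ^{-[n]}(x) = ∏_{i<n} p(T^i x)`. -/
noncomputable def lamInv {k : ℕ} (p : ShiftSpace k → ℝ) (n : ℕ) (x : ShiftSpace k) : ℝ :=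
  ∏ i ∈ Finset.range n, p (shiftT^[i] x)

/-- `H^{β[n]}(x) = ∏_{i<n} H(T^i x)^β`. -/
noncomputable def hPow {k : ℕ} (H : ShiftSpace k → ℝ) (β : ℝ) (n : ℕ)
    (x : ShiftSpace k) : ℝ :=
  ∏ i ∈ Finset.range n, H (shiftT^[i] x) ^ β

/-- `Λ_n = H^{-β[n]} · λ^{[n]}`. -/
noncomputable def lambdaN {k : ℕ} (p H : ShiftSpace k → ℝ) (β : ℝ) (n : ℕ)
    (x : ShiftSpace k) : ℝ :=
  hPow H (-β) n x * (lamInv p n x)⁻¹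

/-- The Ruelle operator `ℒ_{-β log H}` on real functions. -/
noncomputable def ruelleH {k : ℕ} (H : ShiftSpace k → ℝ) (β : ℝ) (f : ShiftSpace k → ℝ) :
    ShiftSpace k → ℝ :=
  fun x => ∑ i : Fin k, H (consS i x) ^ (-β) * f (consS i x)

set_option linter.unusedSectionVars false

section AuxLemmas

variable {k : ℕ} [NeZero k]

lemma shiftT_consS (i : Fin k) (x : ShiftSpace k) : shiftT (consS i x) = x := rfl

lemma continuous_shiftT : Continuous (shiftT (k := k)) :=
  continuous_pi fun n => continuous_apply (n + 1)

lemma continuous_shiftT_iter (n : ℕ) : Continuous (shiftT (k := k))^[n] :=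
  continuous_shiftT.iterate n

lemma continuous_consS (i : Fin k) : Continuous (consS i) := by
  apply continuous_pi
  intro n
  cases n with
  | zero => exact continuous_const
  | succ m => exact continuous_apply m

variable (p : ShiftSpace k → ℝ)

lemma ruelleOp_continuous (hp : Continuous p) {f : ShiftSpace k → ℂ} (hf : Continuous f) :
    Continuous (ruelleOp p f) := by
  apply continuous_finset_sum
  intro i _
  exact (Complex.continuous_ofReal.comp (hp.comp (continuous_consS i))).mul
    (hf.comp (continuous_consS i))

lemma ruelleOp_iter_continuous (hp : Continuous p) {f : ShiftSpace k → ℂ} (hf : Continuous f)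
    (n : ℕ) : Continuous ((ruelleOp p)^[n] f) := by
  induction n with
  | zero => exact hf
  | succ n ih =>
    rw [Function.iterate_succ_apply']
    exact ruelleOp_continuous p hp ih

lemma ruelleOp_mul_comp (g h : ShiftSpace k → ℂ) :
    ruelleOp p (fun x => g x * h (shiftT x)) = fun x => ruelleOp p g x * h x := by
  funext x
  simp only [ruelleOp, shiftT_consS]
  rw [Finset.sum_mul]
  exact Finset.sum_congr rfl fun i _ => by ring

lemma ruelleOp_iter_mul_comp (n : ℕ) (g h : ShiftSpace k → ℂ) :
    (ruelleOp p)^[n] (fun x => g x * h (shiftT^[n] x)) =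
      fun x => (ruelleOp p)^[n] g x * h x := by
  induction n generalizing h with
  | zero => simp
  | succ n ih =>
    have e1 : (fun x => g x * h (shiftT^[n + 1] x)) =
        fun x => g x * (h ∘ shiftT) (shiftT^[n] x) := by
      funext x
      simp only [Function.comp_apply, ← Function.iterate_succ_apply' shiftT]
    rw [Function.iterate_succ_apply' (ruelleOp p), e1, ih (h ∘ shiftT),
      Function.iterate_succ_apply' (ruelleOp p) n g]
    simp only [Function.comp_apply]
    exact ruelleOp_mul_comp p ((ruelleOp p)^[n] g) h

lemma shift_integrable {E : Type*} [NormedAddCommGroup E] (μ : Measure (ShiftSpace k))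
    [IsFiniteMeasure μ] {g : ShiftSpace k → E} (hg : Continuous g) : Integrable g μ :=
  hg.integrable_of_hasCompactSupport
    (IsCompact.of_isClosed_subset isCompact_univ (isClosed_tsupport g) (Set.subset_univ _))

lemma integral_ruelleOp_iter (hp : Continuous p) (μ : Measure (ShiftSpace k))
    (hμ : ∀ f : ShiftSpace k → ℂ, Continuous f →
      ∫ x, ruelleOp p f x ∂μ = ∫ x, f x ∂μ)
    {g : ShiftSpace k → ℂ} (hg : Continuous g) (n : ℕ) :
    ∫ x, (ruelleOp p)^[n] g x ∂μ = ∫ x, g x ∂μ := by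
  induction n with
  | zero => simp
  | succ n ih =>
    simp only [Function.iterate_succ_apply' (ruelleOp p)]
    rw [hμ _ (ruelleOp_iter_continuous p hp hg n), ih]

lemma integral_comp_shiftT (hp_norm : ∀ x : ShiftSpace k, ∑ i : Fin k, p (consS i x) = 1)
    (μ : Measure (ShiftSpace k))
    (hμ : ∀ f : ShiftSpace k → ℂ, Continuous f →
      ∫ x, ruelleOp p f x ∂μ = ∫ x, f x ∂μ)
    {g : ShiftSpace k → ℝ} (hg : Continuous g) :
    ∫ x, g (shiftT x) ∂μ = ∫ x, g x ∂μ := by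
  have h1 := hμ (fun x => ((g (shiftT x) : ℝ) : ℂ))
    (Complex.continuous_ofReal.comp (hg.comp continuous_shiftT))
  have h2 : ruelleOp p (fun x => ((g (shiftT x) : ℝ) : ℂ)) = fun x => ((g x : ℝ) : ℂ) := by
    funext x
    simp only [ruelleOp, shiftT_consS]
    rw [← Finset.sum_mul, ← Complex.ofReal_sum, hp_norm x]
    simp
  rw [h2] at h1
  have e1 : ∫ x, ((g (shiftT x) : ℝ) : ℂ) ∂μ = ((∫ x, g (shiftT x) ∂μ : ℝ) : ℂ) :=
    integral_ofReal
  have e2 : ∫ x, ((g x : ℝ) : ℂ) ∂μ = ((∫ x, g x ∂μ : ℝ) : ℂ) := integral_ofReal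
  rw [e1, e2] at h1
  exact_mod_cast h1.symm

lemma measurePreserving_shiftT (hp_norm : ∀ x : ShiftSpace k, ∑ i : Fin k, p (consS i x) = 1)
    (μ : Measure (ShiftSpace k)) [IsProbabilityMeasure μ]
    (hμ : ∀ f : ShiftSpace k → ℂ, Continuous f →
      ∫ x, ruelleOp p f x ∂μ = ∫ x, f x ∂μ) :
    MeasurePreserving (shiftT (k := k)) μ μ := by
  refine ⟨continuous_shiftT.measurable, ?_⟩
  have : IsProbabilityMeasure (μ.map shiftT) :=
    Measure.isProbabilityMeasure_map continuous_shiftT.measurable.aemeasurable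
  apply ext_of_forall_lintegral_eq_of_IsFiniteMeasure
  intro f
  rw [lintegral_map (f.continuous.measurable.coe_nnreal_ennreal)
    continuous_shiftT.measurable]
  have hint1 : Integrable (fun x => ((f (shiftT x) : ℝ))) μ :=
    shift_integrable μ ((NNReal.continuous_coe.comp f.continuous).comp continuous_shiftT)
  have hint2 : Integrable (fun x => ((f x : ℝ))) μ :=
    shift_integrable μ (NNReal.continuous_coe.comp f.continuous)
  rw [lintegral_coe_eq_integral (fun x => f (shiftT x)) hint1,
    lintegral_coe_eq_integral f hint2]
  congr 1
  exact integral_comp_shiftT p hp_norm μ hμ (NNReal.continuous_coe.comp f.continuous)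

lemma key_duality (hp : Continuous p)
    (hp_norm : ∀ x : ShiftSpace k, ∑ i : Fin k, p (consS i x) = 1)
    (μ : Measure (ShiftSpace k)) [IsProbabilityMeasure μ]
    (hμ : ∀ f : ShiftSpace k → ℂ, Continuous f →
      ∫ x, ruelleOp p f x ∂μ = ∫ x, f x ∂μ)
    {g : ShiftSpace k → ℂ} (hg : Continuous g) (n : ℕ)
    {H : ShiftSpace k → ℂ} (hH : Integrable H μ) :
    ∫ x, g x * H (shiftT^[n] x) ∂μ = ∫ x, (ruelleOp p)^[n] g x * H x ∂μ := by
  have mpn : MeasurePreserving (shiftT (k := k))^[n] μ μ :=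
    (measurePreserving_shiftT p hp_norm μ hμ).iterate n
  set G := (ruelleOp p)^[n] g with hGdef
  have hG : Continuous G := ruelleOp_iter_continuous p hp hg n
  set Cg := ‖BoundedContinuousFunction.mkOfCompact (ContinuousMap.mk g hg)‖ with hCgdef
  have hCg0 : 0 ≤ Cg := norm_nonneg _
  have hCg : ∀ x, ‖g x‖ ≤ Cg := fun x =>
    BoundedContinuousFunction.norm_coe_le_norm (BoundedContinuousFunction.mkOfCompact ⟨g, hg⟩) x
  set CG := ‖BoundedContinuousFunction.mkOfCompact (ContinuousMap.mk G hG)‖ with hCGdef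
  have hCG0 : 0 ≤ CG := norm_nonneg _
  have hCG : ∀ x, ‖G x‖ ≤ CG := fun x =>
    BoundedContinuousFunction.norm_coe_le_norm (BoundedContinuousFunction.mkOfCompact ⟨G, hG⟩) x
  have hcont : ∀ φ : ShiftSpace k → ℂ, Continuous φ →
      ∫ x, g x * φ (shiftT^[n] x) ∂μ = ∫ x, G x * φ x ∂μ := by
    intro φ hφ
    have h1 := integral_ruelleOp_iter p hp μ hμ
      (g := fun x => g x * φ (shiftT^[n] x)) (hg.mul (hφ.comp (continuous_shiftT_iter n))) n
    rw [ruelleOp_iter_mul_comp p n g φ] at h1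
    exact h1.symm
  have key : ∀ ε : ℝ, 0 < ε →
      ‖(∫ x, g x * H (shiftT^[n] x) ∂μ) - ∫ x, G x * H x ∂μ‖ ≤ (Cg + CG + 1) * ε := by
    intro ε hε
    obtain ⟨φ, hφle, hφint⟩ := hH.exists_boundedContinuous_integral_sub_le hε
    have hφc : Continuous fun x => φ x := φ.continuous
    have hHc : Integrable (fun x => H (shiftT^[n] x)) μ :=
      (mpn.integrable_comp hH.aestronglyMeasurable).mpr hH
    have hφTc : Integrable (fun x => φ (shiftT^[n] x)) μ :=
      shift_integrable μ (hφc.comp (continuous_shiftT_iter n))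
    have int1 : Integrable (fun x => g x * H (shiftT^[n] x)) μ :=
      hHc.bdd_mul hg.aestronglyMeasurable (Filter.Eventually.of_forall hCg)
    have int2 : Integrable (fun x => g x * φ (shiftT^[n] x)) μ :=
      hφTc.bdd_mul hg.aestronglyMeasurable (Filter.Eventually.of_forall hCg)
    have int3 : Integrable (fun x => G x * φ x) μ :=
      hφint.bdd_mul hG.aestronglyMeasurable (Filter.Eventually.of_forall hCG)
    have int4 : Integrable (fun x => G x * H x) μ :=
      hH.bdd_mul hG.aestronglyMeasurable (Filter.Eventually.of_forall hCG)
    have hmid := hcont (fun x => φ x) hφc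
    have hsub : Integrable (fun x => H x - φ x) μ := hH.sub hφint
    have d1 : (∫ x, g x * H (shiftT^[n] x) ∂μ) - (∫ x, g x * φ (shiftT^[n] x) ∂μ)
        = ∫ x, g x * (H (shiftT^[n] x) - φ (shiftT^[n] x)) ∂μ := by
      rw [← integral_sub int1 int2]
      congr 1
      funext x
      ring
    have d2 : (∫ x, G x * φ x ∂μ) - (∫ x, G x * H x ∂μ)
        = ∫ x, G x * (φ x - H x) ∂μ := by
      rw [← integral_sub int3 int4]
      congr 1
      funext x
      ring
    have e0 : ∫ x, ‖H (shiftT^[n] x) - φ (shiftT^[n] x)‖ ∂μ = ∫ x, ‖H x - φ x‖ ∂μ := by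
      have h := integral_map (φ := shiftT^[n]) (f := fun x => ‖H x - φ x‖)
        mpn.measurable.aemeasurable
        (by rw [mpn.map_eq]; exact hsub.aestronglyMeasurable.norm)
      rw [mpn.map_eq] at h
      exact h.symm
    have b1 : ‖∫ x, g x * (H (shiftT^[n] x) - φ (shiftT^[n] x)) ∂μ‖ ≤ Cg * ε := by
      calc ‖∫ x, g x * (H (shiftT^[n] x) - φ (shiftT^[n] x)) ∂μ‖
          ≤ ∫ x, ‖g x * (H (shiftT^[n] x) - φ (shiftT^[n] x))‖ ∂μ :=
            norm_integral_le_integral_norm _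
        _ ≤ ∫ x, Cg * ‖H (shiftT^[n] x) - φ (shiftT^[n] x)‖ ∂μ := by
            refine integral_mono ?_ ?_ ?_
            · exact (int1.sub int2).norm.congr
                (Filter.Eventually.of_forall fun x => by simp only [Pi.sub_apply, ← mul_sub])
            · exact ((hHc.sub hφTc).norm.const_mul Cg)
            intro x
            calc ‖g x * (H (shiftT^[n] x) - φ (shiftT^[n] x))‖
                = ‖g x‖ * ‖H (shiftT^[n] x) - φ (shiftT^[n] x)‖ := norm_mul _ _
              _ ≤ Cg * ‖H (shiftT^[n] x) - φ (shiftT^[n] x)‖ :=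
                  mul_le_mul_of_nonneg_right (hCg x) (norm_nonneg _)
        _ = Cg * ∫ x, ‖H (shiftT^[n] x) - φ (shiftT^[n] x)‖ ∂μ := integral_const_mul _ _
        _ = Cg * ∫ x, ‖H x - φ x‖ ∂μ := by rw [e0]
        _ ≤ Cg * ε := mul_le_mul_of_nonneg_left hφle hCg0
    have b2 : ‖∫ x, G x * (φ x - H x) ∂μ‖ ≤ CG * ε := by
      have e1 : ∫ x, ‖φ x - H x‖ ∂μ = ∫ x, ‖H x - φ x‖ ∂μ := by
        congr 1
        funext x
        rw [norm_sub_rev]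
      calc ‖∫ x, G x * (φ x - H x) ∂μ‖
          ≤ ∫ x, ‖G x * (φ x - H x)‖ ∂μ := norm_integral_le_integral_norm _
        _ ≤ ∫ x, CG * ‖φ x - H x‖ ∂μ := by
            refine integral_mono ?_ ?_ ?_
            · exact (int3.sub int4).norm.congr
                (Filter.Eventually.of_forall fun x => by simp only [Pi.sub_apply, ← mul_sub])
            · exact ((hφint.sub hH).norm.const_mul CG)
            intro x
            calc ‖G x * (φ x - H x)‖ = ‖G x‖ * ‖φ x - H x‖ := norm_mul _ _
              _ ≤ CG * ‖φ x - H x‖ := mul_le_mul_of_nonneg_right (hCG x) (norm_nonneg _)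
        _ = CG * ∫ x, ‖φ x - H x‖ ∂μ := integral_const_mul _ _
        _ = CG * ∫ x, ‖H x - φ x‖ ∂μ := by rw [e1]
        _ ≤ CG * ε := mul_le_mul_of_nonneg_left hφle hCG0
    have dec : (∫ x, g x * H (shiftT^[n] x) ∂μ) - ∫ x, G x * H x ∂μ
        = (∫ x, g x * (H (shiftT^[n] x) - φ (shiftT^[n] x)) ∂μ)
          + ∫ x, G x * (φ x - H x) ∂μ := by
      rw [← d1, ← d2, hmid]
      ring
    rw [dec]
    calc ‖(∫ x, g x * (H (shiftT^[n] x) - φ (shiftT^[n] x)) ∂μ)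
          + ∫ x, G x * (φ x - H x) ∂μ‖
        ≤ ‖∫ x, g x * (H (shiftT^[n] x) - φ (shiftT^[n] x)) ∂μ‖
          + ‖∫ x, G x * (φ x - H x) ∂μ‖ := norm_add_le _ _
      _ ≤ Cg * ε + CG * ε := add_le_add b1 b2
      _ ≤ (Cg + CG + 1) * ε := by nlinarith
  have hC : (0 : ℝ) < Cg + CG + 1 := by linarith
  have hnorm : ‖(∫ x, g x * H (shiftT^[n] x) ∂μ) - ∫ x, G x * H x ∂μ‖ ≤ 0 := by
    apply le_of_forall_pos_le_add
    intro ε hε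
    have := key (ε / (Cg + CG + 1)) (div_pos hε hC)
    rw [mul_div_cancel₀ _ hC.ne'] at this
    linarith
  have := norm_le_zero_iff.mp hnorm
  exact sub_eq_zero.mp this

end AuxLemmas

theorem adjoint_pow_mul_mult_mul_pow {k : ℕ} [NeZero k]
    (p : ShiftSpace k → ℝ) (hp_cont : Continuous p) (hp_pos : ∀ x, 0 < p x)
    (hp_norm : ∀ x : ShiftSpace k, ∑ i : Fin k, p (consS i x) = 1)
    (μ : Measure (ShiftSpace k)) [IsProbabilityMeasure μ]
    (hμ : ∀ f : ShiftSpace k → ℂ, Continuous f →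
      ∫ x, ruelleOp p f x ∂μ = ∫ x, f x ∂μ)
    (S : Lp ℂ 2 μ →L[ℂ] Lp ℂ 2 μ)
    (hS : ∀ η : Lp ℂ 2 μ, ∀ᵐ x ∂μ, S η x = η (shiftT x))
    (f : ShiftSpace k → ℂ) (hf : Continuous f) (n : ℕ)
    (Mf : Lp ℂ 2 μ →L[ℂ] Lp ℂ 2 μ)
    (hMf : ∀ η : Lp ℂ 2 μ, ∀ᵐ x ∂μ, Mf η x = f x * η x)
    (MLf : Lp ℂ 2 μ →L[ℂ] Lp ℂ 2 μ)
    (hMLf : ∀ η : Lp ℂ 2 μ, ∀ᵐ x ∂μ, MLf η x = (ruelleOp p)^[n] f x * η x) :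
    ((ContinuousLinearMap.adjoint S) ^ n) ∘L Mf ∘L (S ^ n) = MLf := by
  have hmp : MeasurePreserving (shiftT (k := k)) μ μ :=
    measurePreserving_shiftT p hp_norm μ hμ
  have hSn : ∀ m : ℕ, ∀ η : Lp ℂ 2 μ, ∀ᵐ x ∂μ, (S ^ m) η x = η (shiftT^[m] x) := by
    intro m
    induction m with
    | zero =>
      intro η
      filter_upwards with x
      rw [pow_zero, ContinuousLinearMap.one_apply, Function.iterate_zero, id_eq]
    | succ m ih =>
      intro η
      have h1 : (S ^ (m + 1)) η = S ((S ^ m) η) := by rw [pow_succ']; rfl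
      have h2 := hS ((S ^ m) η)
      have h3 := hmp.quasiMeasurePreserving.ae_eq_comp (ih η)
      filter_upwards [h2, h3] with x hx2 hx3
      rw [h1, hx2]
      simp only [Function.comp_apply] at hx3
      rw [hx3, ← Function.iterate_succ_apply]
  refine ContinuousLinearMap.ext fun η => ?_
  refine ext_inner_left ℂ fun ξ => ?_
  have hadj : (ContinuousLinearMap.adjoint S) ^ n = ContinuousLinearMap.adjoint (S ^ n) := by
    rw [← ContinuousLinearMap.star_eq_adjoint, ← ContinuousLinearMap.star_eq_adjoint, star_pow]
  rw [ContinuousLinearMap.comp_apply, ContinuousLinearMap.comp_apply, hadj,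
    ContinuousLinearMap.adjoint_inner_right, MeasureTheory.L2.inner_def,
    MeasureTheory.L2.inner_def]
  have hH : Integrable (fun x => (starRingEnd ℂ) (ξ x) * η x) μ := by
    simpa only [RCLike.inner_apply, mul_comm] using MeasureTheory.L2.integrable_inner (𝕜 := ℂ) ξ η
  have hkey := key_duality p hp_cont hp_norm μ hμ hf n hH
  have ha1 := hSn n ξ
  have ha2 := hSn n η
  have ha3 := hMf ((S ^ n) η)
  have ha4 := hMLf η
  calc ∫ x, inner ℂ (((S ^ n) ξ) x) ((Mf ((S ^ n) η)) x) ∂μ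
      = ∫ x, f x * ((starRingEnd ℂ) (ξ (shiftT^[n] x)) * η (shiftT^[n] x)) ∂μ := by
        apply integral_congr_ae
        filter_upwards [ha1, ha2, ha3] with x h1 h2 h3
        rw [RCLike.inner_apply, h1, h3, h2]
        ring
    _ = ∫ x, (ruelleOp p)^[n] f x * ((starRingEnd ℂ) (ξ x) * η x) ∂μ := hkey
    _ = ∫ x, inner ℂ (ξ x) ((MLf η) x) ∂μ := by
        apply integral_congr_ae
        filter_upwards [ha4] with x h4
        rw [RCLike.inner_apply, h4]
        ring
end

section
/- Let Σ⁺ = {0,1}^ℕ with shift T, γ > 1, and let g : Σ⁺ → ℝ take the value a_k = -γ log((k+1)/k) on M_k = [1^k 0] for k ≥ 1, a_0 = -log ζ(γ) on M_0 = [0], and g(111...) = 0. If ν is a Borel probability with ℒ_g^* ν = ν (where ℒ_g(ψ)(y) = ∑_{T(x)=y} e^{g(x)} ψ(x)) and ν({(111...)}) = 0, then ν(M_k) = (k+1)^{-γ}/ζ(γ) for all k ≥ 0. -/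
open MeasureTheory Finset

/-- The shift space `Σ⁺ = {0,1}^ℕ`. -/
abbrev SigmaPlus := ℕ → Fin 2

/-- The left shift on `Σ⁺`. -/
def shift2 (x : SigmaPlus) : SigmaPlus := fun n => x (n + 1)

/-- Prepending a symbol. -/
def cons2 (i : Fin 2) (x : SigmaPlus) : SigmaPlus := fun n => Nat.casesOn n i x

/-- The cylinder `M_k = [1^k 0]`: `k` ones followed by a zero. -/
def Mcyl (k : ℕ) : Set SigmaPlus := {x | (∀ i < k, x i = 1) ∧ x k = 0}

/-- The fixed point `(111…)`. -/
def onesPt : SigmaPlus := fun _ => 1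

/-- The Ruelle operator `ℒ_g ψ (y) = ∑_{T x = y} e^{g x} ψ x`. -/
noncomputable def ruelleG (g : SigmaPlus → ℝ) (ψ : SigmaPlus → ℝ) : SigmaPlus → ℝ :=
  fun y => ∑ i : Fin 2, Real.exp (g (cons2 i y)) * ψ (cons2 i y)

lemma clopen_Mcyl (k : ℕ) : IsClopen (Mcyl k) := by
  have : Mcyl k = (⋂ i ∈ Finset.range k, {x : SigmaPlus | x i = 1}) ∩ {x : SigmaPlus | x k = 0} := by
    ext x; simp [Mcyl]
  rw [this]
  refine IsClopen.inter (isClopen_biInter_finset fun i _ => ?_) ?_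
  · exact (isClopen_discrete {1}).preimage (continuous_apply i)
  · exact (isClopen_discrete {0}).preimage (continuous_apply k)

lemma cons0_mem_Mcyl0 (y : SigmaPlus) : cons2 0 y ∈ Mcyl 0 :=
  ⟨fun i h => absurd h (Nat.not_lt_zero i), rfl⟩

lemma cons1_not_mem_Mcyl0 (y : SigmaPlus) : cons2 1 y ∉ Mcyl 0 := fun h => by
  have : (1 : Fin 2) = 0 := h.2
  simp at this

lemma cons0_not_mem_Mcyl_succ (m : ℕ) (y : SigmaPlus) : cons2 0 y ∉ Mcyl (m + 1) := fun h => by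
  have : (0 : Fin 2) = 1 := h.1 0 (Nat.succ_pos m)
  simp at this

lemma cons1_mem_Mcyl_succ_iff (m : ℕ) (y : SigmaPlus) :
    cons2 1 y ∈ Mcyl (m + 1) ↔ y ∈ Mcyl m := by
  constructor
  · intro h
    exact ⟨fun j hj => h.1 (j + 1) (by omega), h.2⟩
  · intro h
    refine ⟨fun i hi => ?_, h.2⟩
    match i with
    | 0 => rfl
    | j + 1 => exact h.1 j (by omega)

theorem eigenmeasure_masses (γ : ℝ) (hγ : 1 < γ)
    (Z : ℝ) (hZ : Z = ∑' n : ℕ, ((n : ℝ) + 1) ^ (-γ))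
    (g : SigmaPlus → ℝ)
    (hg0 : ∀ x ∈ Mcyl 0, g x = -Real.log Z)
    (hgk : ∀ k : ℕ, 1 ≤ k → ∀ x ∈ Mcyl k, g x = -γ * Real.log (((k : ℝ) + 1) / k))
    (hgfix : g onesPt = 0)
    (ν : Measure SigmaPlus) [IsProbabilityMeasure ν]
    (hν : ∀ ψ : SigmaPlus → ℝ, Continuous ψ →
      ∫ y, ruelleG g ψ y ∂ν = ∫ y, ψ y ∂ν)
    (hfix : ν {onesPt} = 0) :
    ∀ k : ℕ, ν (Mcyl k) = ENNReal.ofReal (((k : ℝ) + 1) ^ (-γ) / Z) := by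
  -- Z is positive
  have hsum : Summable (fun n : ℕ => ((n : ℝ) + 1) ^ (-γ)) := by
    have h1 : Summable (fun n : ℕ => ((n : ℝ)) ^ (-γ)) :=
      Real.summable_nat_rpow.mpr (by linarith)
    have h2 := (summable_nat_add_iff 1).mpr h1
    convert h2 using 2 with n
    · rfl
    push_cast
    ring_nf
  have hZpos : 0 < Z := by
    have h0 : (1 : ℝ) ≤ Z := by
      rw [hZ]
      simpa using Summable.le_tsum hsum 0 fun i _ => Real.rpow_nonneg (by positivity) _
    linarith
  -- indicator functions
  set f : ℕ → SigmaPlus → ℝ := fun k => (Mcyl k).indicator 1 with hf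
  have hcont : ∀ k, Continuous (f k) := fun k =>
    continuous_indicator (by simp [clopen_Mcyl k]) continuous_const.continuousOn
  have hmeas : ∀ k, MeasurableSet (Mcyl k) := fun k => (clopen_Mcyl k).2.measurableSet
  have hint : ∀ k, ∫ y, f k y ∂ν = (ν (Mcyl k)).toReal := fun k =>
    integral_indicator_one (hmeas k)
  have key : ∀ k : ℕ, (ν (Mcyl k)).toReal = ((k : ℝ) + 1) ^ (-γ) / Z := by
    intro k
    induction k with
    | zero =>
      have h0 := hν (f 0) (hcont 0)
      have hr : ∀ y, ruelleG g (f 0) y = 1 / Z := by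
        intro y
        simp only [ruelleG, Fin.sum_univ_two, hf]
        rw [Set.indicator_of_mem (cons0_mem_Mcyl0 y), Set.indicator_of_notMem (cons1_not_mem_Mcyl0 y)]
        rw [hg0 _ (cons0_mem_Mcyl0 y)]
        simp [Real.exp_neg, Real.exp_log hZpos]
      have hL : ∫ y, ruelleG g (f 0) y ∂ν = 1 / Z := by
        simp_rw [hr]
        simp
      rw [hL, hint 0] at h0
      rw [← h0]
      norm_num
    | succ m ih =>
      set a : ℝ := -γ * Real.log ((((m : ℝ) + 1) + 1) / ((m : ℝ) + 1)) with ha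
      have h1 := hν (f (m + 1)) (hcont (m + 1))
      have hr : ∀ y, ruelleG g (f (m + 1)) y = Real.exp a * f m y := by
        intro y
        simp only [ruelleG, Fin.sum_univ_two, hf]
        rw [Set.indicator_of_notMem (cons0_not_mem_Mcyl_succ m y)]
        by_cases hy : y ∈ Mcyl m
        · have hmem : cons2 1 y ∈ Mcyl (m + 1) := (cons1_mem_Mcyl_succ_iff m y).mpr hy
          rw [Set.indicator_of_mem hmem, Set.indicator_of_mem hy]
          rw [hgk (m + 1) (by omega) _ hmem]
          simp only [Pi.one_apply, mul_one]
          push_cast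
          rw [ha]
          ring_nf
        · rw [Set.indicator_of_notMem (fun h => hy ((cons1_mem_Mcyl_succ_iff m y).mp h)),
            Set.indicator_of_notMem hy]
          ring
      have hL : ∫ y, ruelleG g (f (m + 1)) y ∂ν = Real.exp a * (ν (Mcyl m)).toReal := by
        simp_rw [hr]
        rw [MeasureTheory.integral_const_mul, hint m]
      rw [hL, hint (m + 1), ih] at h1
      have hb : (0 : ℝ) < (((m : ℝ) + 1) + 1) / ((m : ℝ) + 1) := by positivity
      have hexp : Real.exp a = ((((m : ℝ) + 1) + 1) / ((m : ℝ) + 1)) ^ (-γ) := by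
        rw [Real.rpow_def_of_pos hb, ha, mul_comm]
      have hmul : ((((m : ℝ) + 1) + 1) / ((m : ℝ) + 1)) ^ (-γ) * (((m : ℝ) + 1) ^ (-γ) / Z)
          = (((m : ℝ) + 1) + 1) ^ (-γ) / Z := by
        rw [← mul_div_assoc, ← Real.mul_rpow (le_of_lt hb) (by positivity),
          div_mul_cancel₀ _ (by positivity : ((m : ℝ) + 1) ≠ 0)]
      rw [← h1, hexp, hmul]
      push_cast
      ring_nf
  intro k
  rw [← ENNReal.ofReal_toReal (measure_ne_top ν (Mcyl k)), key k]
end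

section
/- Define G on elements M_f e_n M_g of the C*-algebra U by G(M_f e_n M_g) = f · λ^{-[n]} · g, where λ^{-[n]}(x) = ∏_{i=0}^{n-1} p(T^i x) and e_n = S^n(S*)^n. Let ν_β satisfy ℒ_β^* ν_β = λ_β ν_β and define ψ(M_f e_n M_g) = ∫ f λ^{-[n]} g dν_β. Then ψ satisfies the KMS condition at inverse temperature β for the generators: for all continuous a,b,c,d and all n, ψ((M_a e_n M_b) σ_{iβ}(M_c e_n M_d)) = ψ((M_c e_n M_d)(M_a e_n M_b)), where σ_{iβ}(M_c e_n M_d) = M_c M_{H^{-β[n]}} e_n M_{H^{β[n]}} M_d. -/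
open MeasureTheory Finset

namespace KMSAux

set_option linter.unusedSectionVars false

variable {k : ℕ} [NeZero k]

lemma shiftT_consS (i : Fin k) (x : ShiftSpace k) : shiftT (consS i x) = x := rfl

lemma continuous_shiftT : Continuous (shiftT (k := k)) :=
  continuous_pi fun n => continuous_apply (n + 1)

lemma continuous_consS (i : Fin k) : Continuous (consS (k := k) i) := by
  refine continuous_pi fun n => ?_
  cases n with
  | zero => exact continuous_const
  | succ m => exact continuous_apply m

/-- generic complex-weighted transfer operator -/
noncomputable def rop (W : ShiftSpace k → ℂ) (f : ShiftSpace k → ℂ) : ShiftSpace k → ℂ :=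
  fun x => ∑ i : Fin k, W (consS i x) * f (consS i x)

lemma rop_continuous {W f : ShiftSpace k → ℂ} (hW : Continuous W) (hf : Continuous f) :
    Continuous (rop W f) := by
  refine continuous_finset_sum _ fun i _ => ?_
  exact (hW.comp (continuous_consS i)).mul (hf.comp (continuous_consS i))

lemma rop_iter_continuous {W : ShiftSpace k → ℂ} (hW : Continuous W)
    {f : ShiftSpace k → ℂ} (hf : Continuous f) (n : ℕ) :
    Continuous ((rop W)^[n] f) := by
  induction n generalizing f with
  | zero => simpa using hf
  | succ n ih =>
    rw [Function.iterate_succ_apply]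
    exact ih (rop_continuous hW hf)

lemma rop_pull (W w g : ShiftSpace k → ℂ) (n : ℕ) :
    (rop W)^[n] (fun x => w (shiftT^[n] x) * g x)
      = fun x => w x * (rop W)^[n] g x := by
  induction n generalizing g with
  | zero => simp
  | succ n ih =>
    rw [Function.iterate_succ_apply, Function.iterate_succ_apply]
    have h1 : rop W (fun x => w (shiftT^[n+1] x) * g x)
        = fun x => w (shiftT^[n] x) * rop W g x := by
      funext x
      show ∑ i : Fin k, W (consS i x) * (w (shiftT^[n+1] (consS i x)) * g (consS i x))
          = w (shiftT^[n] x) * ∑ i : Fin k, W (consS i x) * g (consS i x)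
      rw [Finset.mul_sum]
      refine Finset.sum_congr rfl fun i _ => ?_
      rw [Function.iterate_succ_apply, shiftT_consS]
      ring
    rw [h1, ih]

lemma lamInv_succ (p : ShiftSpace k → ℝ) (n : ℕ) (x : ShiftSpace k) :
    lamInv p (n+1) x = lamInv p n (shiftT x) * p x := by
  unfold lamInv
  rw [Finset.prod_range_succ']
  simp [Function.iterate_succ_apply]

lemma hPow_succ (H : ShiftSpace k → ℝ) (β : ℝ) (n : ℕ) (x : ShiftSpace k) :
    hPow H β (n+1) x = hPow H β n (shiftT x) * H x ^ β := by
  unfold hPow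
  rw [Finset.prod_range_succ']
  simp [Function.iterate_succ_apply]

lemma continuous_lamInv {p : ShiftSpace k → ℝ} (hp : Continuous p) (n : ℕ) :
    Continuous (lamInv p n) :=
  continuous_finset_prod _ fun i _ => hp.comp (continuous_shiftT.iterate i)

lemma continuous_hPow {H : ShiftSpace k → ℝ} (hH : Continuous H) (hHpos : ∀ x, 0 < H x)
    (β : ℝ) (n : ℕ) : Continuous (hPow H β n) :=
  continuous_finset_prod _ fun i _ =>
    (hH.comp (continuous_shiftT.iterate i)).rpow_const fun x => Or.inl (hHpos _).ne'

lemma rop_hlam (p H : ShiftSpace k → ℝ) (hH : ∀ x, 0 < H x) (β : ℝ) (n : ℕ)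
    (g : ShiftSpace k → ℂ) :
    (rop (fun z => ((H z ^ (-β) : ℝ) : ℂ)))^[n]
        (fun x => ((hPow H β n x : ℝ) : ℂ) * ((lamInv p n x : ℝ) : ℂ) * g x)
      = (rop (fun z => ((p z : ℝ) : ℂ)))^[n] g := by
  induction n generalizing g with
  | zero =>
    simp only [Function.iterate_zero, id]
    funext x
    simp [hPow, lamInv]
  | succ n ih =>
    rw [Function.iterate_succ_apply, Function.iterate_succ_apply]
    have h1 : rop (fun z => ((H z ^ (-β) : ℝ) : ℂ))
        (fun x => ((hPow H β (n+1) x : ℝ) : ℂ) * ((lamInv p (n+1) x : ℝ) : ℂ) * g x)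
        = fun x => ((hPow H β n x : ℝ) : ℂ) * ((lamInv p n x : ℝ) : ℂ)
            * rop (fun z => ((p z : ℝ) : ℂ)) g x := by
      funext x
      show ∑ i : Fin k, ((H (consS i x) ^ (-β) : ℝ) : ℂ)
            * (((hPow H β (n+1) (consS i x) : ℝ) : ℂ)
              * ((lamInv p (n+1) (consS i x) : ℝ) : ℂ) * g (consS i x))
          = ((hPow H β n x : ℝ) : ℂ) * ((lamInv p n x : ℝ) : ℂ)
            * ∑ i : Fin k, ((p (consS i x) : ℝ) : ℂ) * g (consS i x)
      rw [Finset.mul_sum]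
      refine Finset.sum_congr rfl fun i _ => ?_
      rw [hPow_succ, lamInv_succ, shiftT_consS]
      have h2 : ((H (consS i x) ^ (-β) : ℝ) : ℂ) * ((H (consS i x) ^ β : ℝ) : ℂ) = 1 := by
        rw [← Complex.ofReal_mul, Real.rpow_neg (hH _).le,
          inv_mul_cancel₀ (Real.rpow_pos_of_pos (hH _) β).ne', Complex.ofReal_one]
      push_cast
      linear_combination (((hPow H β n x : ℝ) : ℂ) * ((lamInv p n x : ℝ) : ℂ)
        * ((p (consS i x) : ℝ) : ℂ) * g (consS i x)) * h2
    rw [h1, ih (rop _ g)]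

lemma rop_lam (p H : ShiftSpace k → ℝ) (β : ℝ) (n : ℕ) (g : ShiftSpace k → ℂ) :
    (rop (fun z => ((H z ^ (-β) : ℝ) : ℂ)))^[n]
        (fun x => ((lamInv p n x : ℝ) : ℂ) * g x)
      = (rop (fun z => ((p z : ℝ) : ℂ)))^[n]
          (fun x => ((hPow H (-β) n x : ℝ) : ℂ) * g x) := by
  induction n generalizing g with
  | zero =>
    simp only [Function.iterate_zero, id]
    funext x
    simp [hPow, lamInv]
  | succ n ih =>
    rw [Function.iterate_succ_apply, Function.iterate_succ_apply]
    have h1 : rop (fun z => ((H z ^ (-β) : ℝ) : ℂ))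
        (fun x => ((lamInv p (n+1) x : ℝ) : ℂ) * g x)
        = fun x => ((lamInv p n x : ℝ) : ℂ)
            * rop (fun z => ((p z : ℝ) : ℂ)) (fun z => ((H z ^ (-β) : ℝ) : ℂ) * g z) x := by
      funext x
      show ∑ i : Fin k, ((H (consS i x) ^ (-β) : ℝ) : ℂ)
            * (((lamInv p (n+1) (consS i x) : ℝ) : ℂ) * g (consS i x))
          = ((lamInv p n x : ℝ) : ℂ)
            * ∑ i : Fin k, ((p (consS i x) : ℝ) : ℂ)
              * (((H (consS i x) ^ (-β) : ℝ) : ℂ) * g (consS i x))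
      rw [Finset.mul_sum]
      refine Finset.sum_congr rfl fun i _ => ?_
      rw [lamInv_succ, shiftT_consS]
      push_cast
      ring
    have h2 : rop (fun z => ((p z : ℝ) : ℂ))
        (fun x => ((hPow H (-β) (n+1) x : ℝ) : ℂ) * g x)
        = fun x => ((hPow H (-β) n x : ℝ) : ℂ)
            * rop (fun z => ((p z : ℝ) : ℂ)) (fun z => ((H z ^ (-β) : ℝ) : ℂ) * g z) x := by
      funext x
      show ∑ i : Fin k, ((p (consS i x) : ℝ) : ℂ)
            * (((hPow H (-β) (n+1) (consS i x) : ℝ) : ℂ) * g (consS i x))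
          = ((hPow H (-β) n x : ℝ) : ℂ)
            * ∑ i : Fin k, ((p (consS i x) : ℝ) : ℂ)
              * (((H (consS i x) ^ (-β) : ℝ) : ℂ) * g (consS i x))
      rw [Finset.mul_sum]
      refine Finset.sum_congr rfl fun i _ => ?_
      rw [hPow_succ, shiftT_consS]
      push_cast
      ring
    rw [h1, h2]
    exact ih _

end KMSAux

section Part2

open scoped NNReal ENNReal
namespace KMSAux

variable {k : ℕ} [NeZero k]

lemma cont_integrable {E : Type*} [NormedAddCommGroup E] {f : ShiftSpace k → E}
    (hf : Continuous f) (m : Measure (ShiftSpace k)) [IsFiniteMeasure m] :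
    Integrable f m :=
  hf.integrable_of_hasCompactSupport
    (IsCompact.of_isClosed_subset isCompact_univ (isClosed_tsupport f) (Set.subset_univ _))

lemma int_rop (W : ShiftSpace k → ℝ) (hW : Continuous W) (c : ℝ)
    (m : Measure (ShiftSpace k)) [IsProbabilityMeasure m]
    (hm : ∀ u : ShiftSpace k → ℝ, Continuous u →
      (∫ x, ∑ i : Fin k, W (consS i x) * u (consS i x) ∂m) = c * ∫ x, u x ∂m)
    (f : ShiftSpace k → ℂ) (hf : Continuous f) :
    ∫ x, rop (fun z => ((W z : ℝ) : ℂ)) f x ∂m = (c : ℂ) * ∫ x, f x ∂m := by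
  have key : ∀ (g : ShiftSpace k → ℂ) (gu gv : ShiftSpace k → ℝ), Continuous gu →
      Continuous gv → (g = fun x => (gu x : ℂ) + (gv x : ℂ) * Complex.I) →
      ∫ x, g x ∂m = ((∫ x, gu x ∂m : ℝ) : ℂ) + ((∫ x, gv x ∂m : ℝ) : ℂ) * Complex.I := by
    intro g gu gv hgu hgv hg
    have h1 : Continuous fun x => ((gu x : ℝ) : ℂ) := Complex.continuous_ofReal.comp hgu
    have h2 : Continuous fun x => ((gv x : ℝ) : ℂ) := Complex.continuous_ofReal.comp hgv
    rw [hg, integral_add (cont_integrable h1 m) ((cont_integrable h2 m).mul_const _),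
      integral_mul_const,
      show ∫ a, ((gu a : ℝ) : ℂ) ∂m = ((∫ x, gu x ∂m : ℝ) : ℂ) from integral_ofReal,
      show ∫ a, ((gv a : ℝ) : ℂ) ∂m = ((∫ x, gv x ∂m : ℝ) : ℂ) from integral_ofReal]
  set u : ShiftSpace k → ℝ := fun x => (f x).re with hu_def
  set v : ShiftSpace k → ℝ := fun x => (f x).im with hv_def
  have hu : Continuous u := Complex.continuous_re.comp hf
  have hv : Continuous v := Complex.continuous_im.comp hf
  have hfd : f = fun x => (u x : ℂ) + (v x : ℂ) * Complex.I := by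
    funext x; simp [hu_def, hv_def]
  set A : ShiftSpace k → ℝ := fun x => ∑ i : Fin k, W (consS i x) * u (consS i x) with hA_def
  set B : ShiftSpace k → ℝ := fun x => ∑ i : Fin k, W (consS i x) * v (consS i x) with hB_def
  have hA : Continuous A :=
    continuous_finset_sum _ fun i _ =>
      (hW.comp (continuous_consS i)).mul (hu.comp (continuous_consS i))
  have hB : Continuous B :=
    continuous_finset_sum _ fun i _ =>
      (hW.comp (continuous_consS i)).mul (hv.comp (continuous_consS i))
  have hrop : rop (fun z => ((W z : ℝ) : ℂ)) f
      = fun x => (A x : ℂ) + (B x : ℂ) * Complex.I := by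
    funext x
    show ∑ i : Fin k, ((W (consS i x) : ℝ) : ℂ) * f (consS i x) = _
    rw [hfd]
    simp only [hA_def, hB_def]
    push_cast
    rw [Finset.sum_mul, ← Finset.sum_add_distrib]
    refine Finset.sum_congr rfl fun i _ => ?_
    ring
  rw [key _ A B hA hB hrop, key f u v hu hv hfd, hm u hu, hm v hv]
  push_cast
  ring

lemma int_rop_iter (W : ShiftSpace k → ℝ) (hW : Continuous W) (c : ℝ)
    (m : Measure (ShiftSpace k)) [IsProbabilityMeasure m]
    (hm : ∀ u : ShiftSpace k → ℝ, Continuous u →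
      (∫ x, ∑ i : Fin k, W (consS i x) * u (consS i x) ∂m) = c * ∫ x, u x ∂m)
    (n : ℕ) (f : ShiftSpace k → ℂ) (hf : Continuous f) :
    ∫ x, (rop (fun z => ((W z : ℝ) : ℂ)))^[n] f x ∂m = (c : ℂ) ^ n * ∫ x, f x ∂m := by
  induction n with
  | zero => simp
  | succ n ih =>
    rw [Function.iterate_succ_apply',
      int_rop W hW c m hm _
        (rop_iter_continuous (show Continuous fun z => ((W z : ℝ) : ℂ) from
          Complex.continuous_ofReal.comp hW) hf n),
      ih, pow_succ]
    ring

lemma map_shiftT (p : ShiftSpace k → ℝ)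
    (hp_norm : ∀ x : ShiftSpace k, ∑ i : Fin k, p (consS i x) = 1)
    (μ : Measure (ShiftSpace k)) [IsProbabilityMeasure μ]
    (hμ : ∀ f : ShiftSpace k → ℝ, Continuous f →
      ∫ x, ruelleOpR p f x ∂μ = ∫ x, f x ∂μ) :
    μ.map shiftT = μ := by
  have hTm : Measurable (shiftT (k := k)) := continuous_shiftT.measurable
  haveI := Measure.isProbabilityMeasure_map (μ := μ) hTm.aemeasurable
  refine ext_of_forall_lintegral_eq_of_IsFiniteMeasure ?_
  intro f
  rw [lintegral_map (show Measurable fun x => ((f x : ℝ≥0) : ℝ≥0∞) from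
    measurable_coe_nnreal_ennreal.comp f.continuous.measurable) hTm]
  have hcont : Continuous fun x => ((f (shiftT x) : ℝ)) :=
    NNReal.continuous_coe.comp (f.continuous.comp continuous_shiftT)
  have hcont' : Continuous fun x => ((f x : ℝ)) := NNReal.continuous_coe.comp f.continuous
  rw [lintegral_coe_eq_integral _ (cont_integrable hcont μ),
    lintegral_coe_eq_integral _ (cont_integrable hcont' μ)]
  congr 1
  have hr : ruelleOpR p (fun x => ((f (shiftT x) : ℝ))) = fun x => ((f x : ℝ)) := by
    funext x
    show ∑ i : Fin k, p (consS i x) * (f (shiftT (consS i x)) : ℝ) = _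
    simp only [shiftT_consS]
    rw [← Finset.sum_mul, hp_norm x, one_mul]
  rw [← hμ _ hcont, hr]

section MulCLM

variable (μ : Measure (ShiftSpace k)) [IsFiniteMeasure μ]

lemma memLp_mul (f : ShiftSpace k → ℂ) (hf : Continuous f) (η : Lp ℂ 2 μ) :
    MemLp (fun x => f x * η x) 2 μ := by
  set B : ℝ := ‖BoundedContinuousFunction.mkOfCompact (⟨f, hf⟩ : C(ShiftSpace k, ℂ))‖ with hB
  have hbd : ∀ x, ‖f x‖ ≤ B := fun x => by
    simpa [hB] using BoundedContinuousFunction.norm_coe_le_norm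
      (BoundedContinuousFunction.mkOfCompact (⟨f, hf⟩ : C(ShiftSpace k, ℂ))) x
  have hmono : eLpNorm (fun x => f x * η x) 2 μ ≤ eLpNorm (fun x => B • (η x : ℂ)) 2 μ := by
    refine eLpNorm_mono_ae (Filter.Eventually.of_forall fun x => ?_)
    rw [norm_mul, norm_smul, Real.norm_eq_abs, abs_of_nonneg (norm_nonneg _)]
    exact mul_le_mul_of_nonneg_right (hbd x) (norm_nonneg _)
  refine ⟨hf.aestronglyMeasurable.mul (Lp.aestronglyMeasurable η), ?_⟩
  refine lt_of_le_of_lt hmono ?_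
  have hrw : (fun x => B • (η x : ℂ)) = B • (⇑η : ShiftSpace k → ℂ) := rfl
  rw [hrw, eLpNorm_const_smul]
  exact ENNReal.mul_lt_top ENNReal.coe_lt_top (Lp.eLpNorm_lt_top η)

end MulCLM

end KMSAux
end Part2

section Part3

open scoped NNReal ENNReal ComplexConjugate
open MeasureTheory

namespace KMSAux

set_option linter.unusedSectionVars false

variable {k : ℕ} [NeZero k]
variable (μ : Measure (ShiftSpace k)) [IsFiniteMeasure μ]

/-- Multiplication by a continuous function as a continuous linear map on `L²`. -/
noncomputable def mulCLM (f : ShiftSpace k → ℂ) (hf : Continuous f) :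
    Lp ℂ 2 μ →L[ℂ] Lp ℂ 2 μ :=
  LinearMap.mkContinuous
    { toFun := fun η => (memLp_mul μ f hf η).toLp _
      map_add' := fun η ζ => by
        apply Lp.ext
        filter_upwards [MemLp.coeFn_toLp (memLp_mul μ f hf (η + ζ)),
          MemLp.coeFn_toLp (memLp_mul μ f hf η), MemLp.coeFn_toLp (memLp_mul μ f hf ζ),
          Lp.coeFn_add η ζ,
          Lp.coeFn_add ((memLp_mul μ f hf η).toLp _) ((memLp_mul μ f hf ζ).toLp _)]
          with x h1 h2 h3 h4 h5
        rw [h1, h5, Pi.add_apply, h2, h3, h4, Pi.add_apply, mul_add]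
      map_smul' := fun a η => by
        apply Lp.ext
        filter_upwards [MemLp.coeFn_toLp (memLp_mul μ f hf (a • η)),
          MemLp.coeFn_toLp (memLp_mul μ f hf η),
          Lp.coeFn_smul a η, Lp.coeFn_smul a ((memLp_mul μ f hf η).toLp _)]
          with x h1 h2 h3 h4
        rw [h1, RingHom.id_apply, h4, Pi.smul_apply, h2, h3, Pi.smul_apply,
          smul_eq_mul, smul_eq_mul]
        ring }
    ‖BoundedContinuousFunction.mkOfCompact (⟨f, hf⟩ : C(ShiftSpace k, ℂ))‖
    (by
      intro η
      set B : ℝ := ‖BoundedContinuousFunction.mkOfCompact (⟨f, hf⟩ : C(ShiftSpace k, ℂ))‖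
        with hBd
      have hbd : ∀ x, ‖f x‖ ≤ B := fun x => by
        simpa [hBd] using BoundedContinuousFunction.norm_coe_le_norm
          (BoundedContinuousFunction.mkOfCompact (⟨f, hf⟩ : C(ShiftSpace k, ℂ))) x
      have hmono : eLpNorm (fun x => f x * η x) 2 μ ≤ eLpNorm (fun x => B • (η x : ℂ)) 2 μ := by
        refine eLpNorm_mono_ae (Filter.Eventually.of_forall fun x => ?_)
        rw [norm_mul, norm_smul, Real.norm_eq_abs, abs_of_nonneg (norm_nonneg _)]
        exact mul_le_mul_of_nonneg_right (hbd x) (norm_nonneg _)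
      have hrw : (fun x => B • (η x : ℂ)) = B • (⇑η : ShiftSpace k → ℂ) := rfl
      rw [hrw, eLpNorm_const_smul] at hmono
      have hfin : (‖B‖₊ : ℝ≥0∞) * eLpNorm (⇑η) 2 μ ≠ ⊤ :=
        (ENNReal.mul_lt_top ENNReal.coe_lt_top (Lp.eLpNorm_lt_top η)).ne
      show ‖(memLp_mul μ f hf η).toLp _‖ ≤ B * ‖η‖
      rw [Lp.norm_toLp, Lp.norm_def]
      calc (eLpNorm (fun x => f x * η x) 2 μ).toReal
          ≤ ((‖B‖₊ : ℝ≥0∞) * eLpNorm (⇑η) 2 μ).toReal := by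
            refine ENNReal.toReal_mono hfin ?_
            simpa [ENNReal.smul_def, enorm_eq_nnnorm] using hmono
        _ = B * (eLpNorm (⇑η) 2 μ).toReal := by
            rw [ENNReal.toReal_mul, ENNReal.coe_toReal, coe_nnnorm, Real.norm_eq_abs,
              abs_of_nonneg (norm_nonneg _)])

lemma mulCLM_coe [IsFiniteMeasure μ] (f : ShiftSpace k → ℂ) (hf : Continuous f) (η : Lp ℂ 2 μ) :
    ⇑(mulCLM μ f hf η) =ᵐ[μ] fun x => f x * η x :=
  MemLp.coeFn_toLp (memLp_mul μ f hf η)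

section Smap

variable [IsProbabilityMeasure μ]
variable (S : Lp ℂ 2 μ →L[ℂ] Lp ℂ 2 μ)

lemma MP_iter (hmapT : μ.map shiftT = μ) (n : ℕ) : MeasurePreserving (shiftT^[n]) μ μ :=
  (⟨continuous_shiftT.measurable, hmapT⟩ : MeasurePreserving shiftT μ μ).iterate n

lemma pow_S_apply (hmapT : μ.map shiftT = μ)
    (hS : ∀ η : Lp ℂ 2 μ, ∀ᵐ x ∂μ, S η x = η (shiftT x)) (n : ℕ) (η : Lp ℂ 2 μ) :
    ⇑((S ^ n) η) =ᵐ[μ] fun x => η (shiftT^[n] x) := by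
  induction n generalizing η with
  | zero =>
    rw [pow_zero]
    simp only [Function.iterate_zero, id, ContinuousLinearMap.one_apply]
    exact Filter.EventuallyEq.rfl
  | succ n ih =>
    have h1 : (S ^ (n + 1)) η = (S ^ n) (S η) := by
      rw [pow_succ]; rfl
    rw [h1]
    refine (ih (S η)).trans ?_
    have h2 : (fun x => (S η) (shiftT^[n] x)) =ᵐ[μ] fun x => η (shiftT (shiftT^[n] x)) :=
      (MP_iter μ hmapT n).quasiMeasurePreserving.ae_eq_comp (hS η)
    refine h2.trans ?_
    filter_upwards with x
    rw [← Function.iterate_succ_apply' shiftT n x]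

lemma S_pow_mul (hmapT : μ.map shiftT = μ)
    (hS : ∀ η : Lp ℂ 2 μ, ∀ᵐ x ∂μ, S η x = η (shiftT x))
    (n : ℕ) (v : ShiftSpace k → ℂ) (hv : Continuous v) :
    S ^ n * mulCLM μ v hv
      = mulCLM μ (fun x => v (shiftT^[n] x)) (hv.comp (continuous_shiftT.iterate n)) * S ^ n := by
  ext η
  simp only [ContinuousLinearMap.mul_apply]
  have l1 : ⇑((S ^ n) (mulCLM μ v hv η)) =ᵐ[μ] fun x => (mulCLM μ v hv η) (shiftT^[n] x) :=
    pow_S_apply μ S hmapT hS n _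
  have l2 : (fun x => (mulCLM μ v hv η) (shiftT^[n] x))
      =ᵐ[μ] fun x => v (shiftT^[n] x) * η (shiftT^[n] x) :=
    (MP_iter μ hmapT n).quasiMeasurePreserving.ae_eq_comp (mulCLM_coe μ v hv η)
  have r1 : ⇑(mulCLM μ (fun x => v (shiftT^[n] x)) (hv.comp (continuous_shiftT.iterate n))
        ((S ^ n) η))
      =ᵐ[μ] fun x => v (shiftT^[n] x) * ((S ^ n) η) x :=
    mulCLM_coe μ (fun x => v (shiftT^[n] x)) (hv.comp (continuous_shiftT.iterate n)) _
  have r2 : ⇑((S ^ n) η) =ᵐ[μ] fun x => η (shiftT^[n] x) := pow_S_apply μ S hmapT hS n η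
  filter_upwards [l1, l2, r1, r2] with x h1 h2 h3 h4
  rw [h1, h2, h3, h4]

end Smap

end KMSAux
end Part3

section Part4

open scoped NNReal ENNReal ComplexConjugate
open MeasureTheory BoundedContinuousFunction

namespace KMSAux

set_option linter.unusedSectionVars false
set_option maxHeartbeats 2000000

variable {k : ℕ} [NeZero k]

lemma adj_conj (μ : Measure (ShiftSpace k)) [IsProbabilityMeasure μ]
    (p : ShiftSpace k → ℝ) (hp_cont : Continuous p)
    (hint : ∀ f : ShiftSpace k → ℂ, Continuous f →
      ∫ x, rop (fun z => ((p z : ℝ) : ℂ)) f x ∂μ = ∫ x, f x ∂μ)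
    (hmapT : μ.map shiftT = μ)
    (S : Lp ℂ 2 μ →L[ℂ] Lp ℂ 2 μ)
    (hS : ∀ η : Lp ℂ 2 μ, ∀ᵐ x ∂μ, S η x = η (shiftT x))
    (n : ℕ) (q : ShiftSpace k → ℂ) (hq : Continuous q)
    (Q : Lp ℂ 2 μ →L[ℂ] Lp ℂ 2 μ)
    (hQ : ∀ η : Lp ℂ 2 μ, ∀ᵐ x ∂μ, Q η x = q x * η x)
    (L : ShiftSpace k → ℂ) (hL : Continuous L)
    (hLeq : L = (rop (fun z => ((p z : ℝ) : ℂ)))^[n] q) :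
    (ContinuousLinearMap.adjoint S) ^ n * Q * S ^ n = mulCLM μ L hL := by
  have hpC : Continuous fun z => ((p z : ℝ) : ℂ) := Complex.continuous_ofReal.comp hp_cont
  have hiter : ∀ (m : ℕ) (f : ShiftSpace k → ℂ), Continuous f →
      ∫ x, (rop (fun z => ((p z : ℝ) : ℂ)))^[m] f x ∂μ = ∫ x, f x ∂μ := by
    intro m
    induction m with
    | zero => intro f hf; simp
    | succ m ih =>
      intro f hf
      rw [Function.iterate_succ_apply', hint _ (rop_iter_continuous hpC hf m), ih f hf]
  have hd : DenseRange
      (⇑(BoundedContinuousFunction.toLp (E := ℂ) 2 μ ℂ :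
        (ShiftSpace k →ᵇ ℂ) →L[ℂ] Lp ℂ 2 μ)) :=
    BoundedContinuousFunction.toLp_denseRange (𝕜 := ℂ) (E := ℂ) (μ := μ) (by norm_num)
  have key : ∀ g h : ShiftSpace k →ᵇ ℂ,
      (inner (𝕜 := ℂ) (BoundedContinuousFunction.toLp (E := ℂ) 2 μ ℂ h)
        (((ContinuousLinearMap.adjoint S) ^ n * Q * S ^ n)
          (BoundedContinuousFunction.toLp (E := ℂ) 2 μ ℂ g)))
        = inner (𝕜 := ℂ) (BoundedContinuousFunction.toLp (E := ℂ) 2 μ ℂ h)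
            (mulCLM μ L hL (BoundedContinuousFunction.toLp (E := ℂ) 2 μ ℂ g)) := by
    intro g h
    have hadj : (ContinuousLinearMap.adjoint S) ^ n = ContinuousLinearMap.adjoint (S ^ n) := by
      rw [← ContinuousLinearMap.star_eq_adjoint, ← ContinuousLinearMap.star_eq_adjoint,
        ← star_pow]
    have hA : ((ContinuousLinearMap.adjoint S) ^ n * Q * S ^ n)
        (BoundedContinuousFunction.toLp (E := ℂ) 2 μ ℂ g)
        = ContinuousLinearMap.adjoint (S ^ n)
            (Q ((S ^ n) (BoundedContinuousFunction.toLp (E := ℂ) 2 μ ℂ g))) := by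
      rw [hadj]; rfl
    rw [hA, ContinuousLinearMap.adjoint_inner_right, L2.inner_def, L2.inner_def]
    simp only [RCLike.inner_apply, starRingEnd_apply]
    have eg : ⇑((S ^ n) (BoundedContinuousFunction.toLp (E := ℂ) 2 μ ℂ g))
        =ᵐ[μ] fun x => g (shiftT^[n] x) :=
      (pow_S_apply μ S hmapT hS n _).trans
        ((MP_iter μ hmapT n).quasiMeasurePreserving.ae_eq_comp
          (BoundedContinuousFunction.coeFn_toLp 2 μ ℂ g))
    have eh : ⇑((S ^ n) (BoundedContinuousFunction.toLp (E := ℂ) 2 μ ℂ h))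
        =ᵐ[μ] fun x => h (shiftT^[n] x) :=
      (pow_S_apply μ S hmapT hS n _).trans
        ((MP_iter μ hmapT n).quasiMeasurePreserving.ae_eq_comp
          (BoundedContinuousFunction.coeFn_toLp 2 μ ℂ h))
    have eQ : ⇑(Q ((S ^ n) (BoundedContinuousFunction.toLp (E := ℂ) 2 μ ℂ g)))
        =ᵐ[μ] fun x => q x * g (shiftT^[n] x) := by
      filter_upwards [hQ ((S ^ n) (BoundedContinuousFunction.toLp (E := ℂ) 2 μ ℂ g)), eg]
        with x h1 h2
      rw [h1, h2]
    have eM : ⇑(mulCLM μ L hL (BoundedContinuousFunction.toLp (E := ℂ) 2 μ ℂ g))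
        =ᵐ[μ] fun x => L x * g x := by
      filter_upwards [mulCLM_coe μ L hL (BoundedContinuousFunction.toLp (E := ℂ) 2 μ ℂ g),
        BoundedContinuousFunction.coeFn_toLp 2 μ ℂ g] with x h1 h2
      rw [h1, h2]
    have hl : ∫ x, star (((S ^ n) (BoundedContinuousFunction.toLp (E := ℂ) 2 μ ℂ h)) x)
          * (Q ((S ^ n) (BoundedContinuousFunction.toLp (E := ℂ) 2 μ ℂ g))) x ∂μ
        = ∫ x, star (h (shiftT^[n] x)) * (q x * g (shiftT^[n] x)) ∂μ := by
      refine integral_congr_ae ?_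
      filter_upwards [eh, eQ] with x h1 h2
      rw [h1, h2]
    have hr : ∫ x, star ((BoundedContinuousFunction.toLp (E := ℂ) 2 μ ℂ h : ShiftSpace k → ℂ) x)
          * (mulCLM μ L hL (BoundedContinuousFunction.toLp (E := ℂ) 2 μ ℂ g)) x ∂μ
        = ∫ x, star (h x) * (L x * g x) ∂μ := by
      refine integral_congr_ae ?_
      filter_upwards [BoundedContinuousFunction.coeFn_toLp 2 μ ℂ h, eM] with x h1 h2
      rw [h1, h2]
    simp only [mul_comm _ (star _)]
    rw [hl, hr]
    set w : ShiftSpace k → ℂ := fun z => star (h z) * g z with hwdef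
    have hw : Continuous w :=
      (continuous_star.comp (map_continuous h)).mul (map_continuous g)
    calc ∫ x, star (h (shiftT^[n] x)) * (q x * g (shiftT^[n] x)) ∂μ
        = ∫ x, w (shiftT^[n] x) * q x ∂μ := by
          refine integral_congr_ae (Filter.Eventually.of_forall fun x => ?_)
          simp only [hwdef]
          ring
      _ = ∫ x, (rop (fun z => ((p z : ℝ) : ℂ)))^[n] (fun x => w (shiftT^[n] x) * q x) x ∂μ :=
          (hiter n _ ((hw.comp (continuous_shiftT.iterate n)).mul hq)).symm
      _ = ∫ x, w x * ((rop (fun z => ((p z : ℝ) : ℂ)))^[n] q) x ∂μ := by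
          rw [rop_pull]
      _ = ∫ x, star (h x) * (L x * g x) ∂μ := by
          rw [hLeq]
          refine integral_congr_ae (Filter.Eventually.of_forall fun x => ?_)
          simp only [hwdef]
          ring
  have hAg : ∀ g : ShiftSpace k →ᵇ ℂ,
      ((ContinuousLinearMap.adjoint S) ^ n * Q * S ^ n)
        (BoundedContinuousFunction.toLp (E := ℂ) 2 μ ℂ g)
        = mulCLM μ L hL (BoundedContinuousFunction.toLp (E := ℂ) 2 μ ℂ g) := by
    intro g
    apply ext_inner_left ℂ
    intro v
    have hcont1 : Continuous fun ζ : Lp ℂ 2 μ =>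
        (inner (𝕜 := ℂ) ζ (((ContinuousLinearMap.adjoint S) ^ n * Q * S ^ n)
          (BoundedContinuousFunction.toLp (E := ℂ) 2 μ ℂ g))) :=
      continuous_id.inner continuous_const
    have hcont2 : Continuous fun ζ : Lp ℂ 2 μ =>
        (inner (𝕜 := ℂ) ζ (mulCLM μ L hL (BoundedContinuousFunction.toLp (E := ℂ) 2 μ ℂ g))) :=
      continuous_id.inner continuous_const
    have := hd.equalizer hcont1 hcont2 (funext fun h => key g h)
    exact congrFun this v
  have hfin : ⇑((ContinuousLinearMap.adjoint S) ^ n * Q * S ^ n) = ⇑(mulCLM μ L hL) :=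
    hd.equalizer (((ContinuousLinearMap.adjoint S) ^ n * Q * S ^ n).continuous)
      ((mulCLM μ L hL).continuous) (funext hAg)
  exact ContinuousLinearMap.ext fun ζ => congrFun hfin ζ

lemma enQen (μ : Measure (ShiftSpace k)) [IsProbabilityMeasure μ]
    (p : ShiftSpace k → ℝ) (hp_cont : Continuous p)
    (hint : ∀ f : ShiftSpace k → ℂ, Continuous f →
      ∫ x, rop (fun z => ((p z : ℝ) : ℂ)) f x ∂μ = ∫ x, f x ∂μ)
    (hmapT : μ.map shiftT = μ)
    (S : Lp ℂ 2 μ →L[ℂ] Lp ℂ 2 μ)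
    (hS : ∀ η : Lp ℂ 2 μ, ∀ᵐ x ∂μ, S η x = η (shiftT x))
    (e : ℕ → (Lp ℂ 2 μ →L[ℂ] Lp ℂ 2 μ))
    (he : ∀ n, e n = (S ^ n) * (ContinuousLinearMap.adjoint S) ^ n)
    (n : ℕ) (q : ShiftSpace k → ℂ) (hq : Continuous q)
    (Q : Lp ℂ 2 μ →L[ℂ] Lp ℂ 2 μ)
    (hQ : ∀ η : Lp ℂ 2 μ, ∀ᵐ x ∂μ, Q η x = q x * η x)
    (E : ShiftSpace k → ℂ) (hE : Continuous E)
    (hEeq : E = fun x => ((rop (fun z => ((p z : ℝ) : ℂ)))^[n] q) (shiftT^[n] x)) :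
    e n * Q * e n = mulCLM μ E hE * e n := by
  subst hEeq
  have hpC : Continuous fun z => ((p z : ℝ) : ℂ) := Complex.continuous_ofReal.comp hp_cont
  have hLq : Continuous ((rop (fun z => ((p z : ℝ) : ℂ)))^[n] q) :=
    rop_iter_continuous hpC hq n
  have h1 := adj_conj μ p hp_cont hint hmapT S hS n q hq Q hQ _ hLq rfl
  have h2 := S_pow_mul μ S hmapT hS n _ hLq
  rw [he n]
  have h3 : (S ^ n * (ContinuousLinearMap.adjoint S) ^ n) * Q
        * (S ^ n * (ContinuousLinearMap.adjoint S) ^ n)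
      = S ^ n * ((ContinuousLinearMap.adjoint S) ^ n * Q * S ^ n)
        * (ContinuousLinearMap.adjoint S) ^ n := by
    simp only [mul_assoc]
  rw [h3, h1, h2, mul_assoc]

end KMSAux
end Part4

section Part5
open scoped NNReal ENNReal
open MeasureTheory

namespace KMSAux

set_option linter.unusedSectionVars false
set_option maxHeartbeats 1000000

variable {k : ℕ} [NeZero k]

lemma key_integrand (p H : ShiftSpace k → ℝ) (hH : ∀ x, 0 < H x) (β : ℝ) (n : ℕ)
    (a b c d : ShiftSpace k → ℂ) :
    (rop (fun z => ((H z ^ (-β) : ℝ) : ℂ)))^[n]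
      (fun x => (a x * ((rop (fun z => ((p z : ℝ) : ℂ)))^[n]
            (fun y => b y * (c y * ((hPow H (-β) n y : ℝ) : ℂ))) (shiftT^[n] x)))
          * ((lamInv p n x : ℝ) : ℂ) * (((hPow H β n x : ℝ) : ℂ) * d x))
    = (rop (fun z => ((H z ^ (-β) : ℝ) : ℂ)))^[n]
      (fun x => (c x * ((rop (fun z => ((p z : ℝ) : ℂ)))^[n]
            (fun y => d y * a y) (shiftT^[n] x)))
          * ((lamInv p n x : ℝ) : ℂ) * b x) := by
  have h1 : (fun x => (a x * ((rop (fun z => ((p z : ℝ) : ℂ)))^[n]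
            (fun y => b y * (c y * ((hPow H (-β) n y : ℝ) : ℂ))) (shiftT^[n] x)))
          * ((lamInv p n x : ℝ) : ℂ) * (((hPow H β n x : ℝ) : ℂ) * d x))
      = fun x => ((rop (fun z => ((p z : ℝ) : ℂ)))^[n]
            (fun y => b y * (c y * ((hPow H (-β) n y : ℝ) : ℂ)))) (shiftT^[n] x)
          * (((hPow H β n x : ℝ) : ℂ) * ((lamInv p n x : ℝ) : ℂ) * (a x * d x)) := by
    funext x; ring
  have h2 : (fun x => (c x * ((rop (fun z => ((p z : ℝ) : ℂ)))^[n]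
            (fun y => d y * a y) (shiftT^[n] x)))
          * ((lamInv p n x : ℝ) : ℂ) * b x)
      = fun x => ((rop (fun z => ((p z : ℝ) : ℂ)))^[n] (fun y => d y * a y)) (shiftT^[n] x)
          * (((lamInv p n x : ℝ) : ℂ) * (c x * b x)) := by
    funext x; ring
  rw [h1, h2, rop_pull, rop_pull, rop_hlam p H hH β n, rop_lam p H β n]
  have h4 : (fun y => b y * (c y * ((hPow H (-β) n y : ℝ) : ℂ)))
      = fun y => ((hPow H (-β) n y : ℝ) : ℂ) * (c y * b y) := by
    funext y; ring
  have h5 : (fun y => d y * a y) = fun y => a y * d y := by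
    funext y; ring
  rw [h4, h5]
  funext x; ring

lemma final_int (p H : ShiftSpace k → ℝ) (hp_cont : Continuous p)
    (hH_cont : Continuous H) (hH_pos : ∀ x, 0 < H x) (β lamβ : ℝ) (hlam : 0 < lamβ)
    (ν : Measure (ShiftSpace k)) [IsProbabilityMeasure ν]
    (hν : ∀ f : ShiftSpace k → ℝ, Continuous f →
      ∫ x, ruelleH H β f x ∂ν = lamβ * ∫ x, f x ∂ν)
    (a b c d : ShiftSpace k → ℂ)
    (ha : Continuous a) (hb : Continuous b) (hc : Continuous c) (hd : Continuous d)
    (n : ℕ) :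
    ∫ x, (a x * ((rop (fun z => ((p z : ℝ) : ℂ)))^[n]
          (fun y => b y * (c y * ((hPow H (-β) n y : ℝ) : ℂ))) (shiftT^[n] x)))
        * ((lamInv p n x : ℝ) : ℂ) * (((hPow H β n x : ℝ) : ℂ) * d x) ∂ν
    = ∫ x, (c x * ((rop (fun z => ((p z : ℝ) : ℂ)))^[n]
          (fun y => d y * a y) (shiftT^[n] x)))
        * ((lamInv p n x : ℝ) : ℂ) * b x ∂ν := by
  have hpC : Continuous fun z => ((p z : ℝ) : ℂ) := Complex.continuous_ofReal.comp hp_cont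
  have hWr : Continuous fun z => H z ^ (-β) :=
    hH_cont.rpow_const fun x => Or.inl (hH_pos x).ne'
  have hWc : Continuous fun z => ((H z ^ (-β) : ℝ) : ℂ) := Complex.continuous_ofReal.comp hWr
  have hhm : Continuous fun y => ((hPow H (-β) n y : ℝ) : ℂ) :=
    Complex.continuous_ofReal.comp (continuous_hPow hH_cont hH_pos (-β) n)
  have hhp : Continuous fun y => ((hPow H β n y : ℝ) : ℂ) :=
    Complex.continuous_ofReal.comp (continuous_hPow hH_cont hH_pos β n)
  have hlc : Continuous fun y => ((lamInv p n y : ℝ) : ℂ) :=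
    Complex.continuous_ofReal.comp (continuous_lamInv hp_cont n)
  have hq1 : Continuous fun y => b y * (c y * ((hPow H (-β) n y : ℝ) : ℂ)) :=
    hb.mul (hc.mul hhm)
  have hq2 : Continuous fun y => d y * a y := hd.mul ha
  have hE1 : Continuous fun x => ((rop (fun z => ((p z : ℝ) : ℂ)))^[n]
      (fun y => b y * (c y * ((hPow H (-β) n y : ℝ) : ℂ))) (shiftT^[n] x)) :=
    (rop_iter_continuous hpC hq1 n).comp (continuous_shiftT.iterate n)
  have hE2 : Continuous fun x => ((rop (fun z => ((p z : ℝ) : ℂ)))^[n]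
      (fun y => d y * a y) (shiftT^[n] x)) :=
    (rop_iter_continuous hpC hq2 n).comp (continuous_shiftT.iterate n)
  have hF1 : Continuous fun x => (a x * ((rop (fun z => ((p z : ℝ) : ℂ)))^[n]
        (fun y => b y * (c y * ((hPow H (-β) n y : ℝ) : ℂ))) (shiftT^[n] x)))
      * ((lamInv p n x : ℝ) : ℂ) * (((hPow H β n x : ℝ) : ℂ) * d x) :=
    ((ha.mul hE1).mul hlc).mul (hhp.mul hd)
  have hF2 : Continuous fun x => (c x * ((rop (fun z => ((p z : ℝ) : ℂ)))^[n]
        (fun y => d y * a y) (shiftT^[n] x)))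
      * ((lamInv p n x : ℝ) : ℂ) * b x :=
    ((hc.mul hE2).mul hlc).mul hb
  have hmν : ∀ u : ShiftSpace k → ℝ, Continuous u →
      (∫ x, ∑ i : Fin k, (fun z => H z ^ (-β)) (consS i x) * u (consS i x) ∂ν)
        = lamβ * ∫ x, u x ∂ν := fun u hu => hν u hu
  have h1 := int_rop_iter (fun z => H z ^ (-β)) hWr lamβ ν hmν n _ hF1
  have h2 := int_rop_iter (fun z => H z ^ (-β)) hWr lamβ ν hmν n _ hF2
  have h3 := key_integrand p H hH_pos β n a b c d
  have hcan : ((lamβ : ℂ)) ^ n ≠ 0 := pow_ne_zero n (by exact_mod_cast hlam.ne')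
  refine mul_left_cancel₀ hcan ?_
  rw [← h1, ← h2, h3]

end KMSAux
end Part5


theorem kms_condition_on_generators {k : ℕ} [NeZero k]
    (p : ShiftSpace k → ℝ) (hp_cont : Continuous p) (hp_pos : ∀ x, 0 < p x)
    (hp_norm : ∀ x : ShiftSpace k, ∑ i : Fin k, p (consS i x) = 1)
    (hp_hold : HolderSeq fun x => Real.log (p x))
    (μ : Measure (ShiftSpace k)) [IsProbabilityMeasure μ]
    (hμ : ∀ f : ShiftSpace k → ℝ, Continuous f →
      ∫ x, ruelleOpR p f x ∂μ = ∫ x, f x ∂μ)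
    (H : ShiftSpace k → ℝ) (hH_cont : Continuous H) (hH_pos : ∀ x, 0 < H x)
    (hH_hold : HolderSeq fun x => Real.log (H x))
    (β lamβ : ℝ) (hlam : 0 < lamβ)
    (ν : Measure (ShiftSpace k)) [IsProbabilityMeasure ν]
    (hν : ∀ f : ShiftSpace k → ℝ, Continuous f →
      ∫ x, ruelleH H β f x ∂ν = lamβ * ∫ x, f x ∂ν)
    (S : Lp ℂ 2 μ →L[ℂ] Lp ℂ 2 μ)
    (hS : ∀ η : Lp ℂ 2 μ, ∀ᵐ x ∂μ, S η x = η (shiftT x))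
    (e : ℕ → (Lp ℂ 2 μ →L[ℂ] Lp ℂ 2 μ))
    (he : ∀ n, e n = (S ^ n) * (ContinuousLinearMap.adjoint S) ^ n)
    (ψ : (Lp ℂ 2 μ →L[ℂ] Lp ℂ 2 μ) → ℂ)
    (hψ : ∀ f g : ShiftSpace k → ℂ, Continuous f → Continuous g → ∀ n : ℕ,
      ∀ Mf Mg : Lp ℂ 2 μ →L[ℂ] Lp ℂ 2 μ,
        (∀ η : Lp ℂ 2 μ, ∀ᵐ x ∂μ, Mf η x = f x * η x) →
        (∀ η : Lp ℂ 2 μ, ∀ᵐ x ∂μ, Mg η x = g x * η x) →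
        ψ (Mf * e n * Mg) =
          ∫ x, f x * (lamInv p n x : ℂ) * g x ∂ν)
    (a b c d : ShiftSpace k → ℂ)
    (ha : Continuous a) (hb : Continuous b) (hc : Continuous c) (hd : Continuous d)
    (n : ℕ)
    (Ma Mb Mc Md MHm MHp : Lp ℂ 2 μ →L[ℂ] Lp ℂ 2 μ)
    (hMa : ∀ η : Lp ℂ 2 μ, ∀ᵐ x ∂μ, Ma η x = a x * η x)
    (hMb : ∀ η : Lp ℂ 2 μ, ∀ᵐ x ∂μ, Mb η x = b x * η x)
    (hMc : ∀ η : Lp ℂ 2 μ, ∀ᵐ x ∂μ, Mc η x = c x * η x)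
    (hMd : ∀ η : Lp ℂ 2 μ, ∀ᵐ x ∂μ, Md η x = d x * η x)
    (hMHm : ∀ η : Lp ℂ 2 μ, ∀ᵐ x ∂μ, MHm η x = (hPow H (-β) n x : ℂ) * η x)
    (hMHp : ∀ η : Lp ℂ 2 μ, ∀ᵐ x ∂μ, MHp η x = (hPow H β n x : ℂ) * η x) :
    ψ ((Ma * e n * Mb) * (Mc * MHm * e n * MHp * Md)) =
      ψ ((Mc * e n * Md) * (Ma * e n * Mb)) := by
  have hpC : Continuous fun z => ((p z : ℝ) : ℂ) := Complex.continuous_ofReal.comp hp_cont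
  have hmapT : μ.map shiftT = μ := KMSAux.map_shiftT p hp_norm μ hμ
  have hint : ∀ f : ShiftSpace k → ℂ, Continuous f →
      ∫ x, KMSAux.rop (fun z => ((p z : ℝ) : ℂ)) f x ∂μ = ∫ x, f x ∂μ := by
    intro f hf
    have h := KMSAux.int_rop p hp_cont 1 μ
      (fun u hu => by rw [one_mul]; exact hμ u hu) f hf
    simpa using h
  have hhm : Continuous fun y => ((hPow H (-β) n y : ℝ) : ℂ) :=
    Complex.continuous_ofReal.comp (KMSAux.continuous_hPow hH_cont hH_pos (-β) n)
  have hhp : Continuous fun y => ((hPow H β n y : ℝ) : ℂ) :=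
    Complex.continuous_ofReal.comp (KMSAux.continuous_hPow hH_cont hH_pos β n)
  have hq1 : Continuous fun y => b y * (c y * ((hPow H (-β) n y : ℝ) : ℂ)) :=
    hb.mul (hc.mul hhm)
  have hq2 : Continuous fun y => d y * a y := hd.mul ha
  have hE1 : Continuous fun x => ((KMSAux.rop (fun z => ((p z : ℝ) : ℂ)))^[n]
      (fun y => b y * (c y * ((hPow H (-β) n y : ℝ) : ℂ))) (shiftT^[n] x)) :=
    (KMSAux.rop_iter_continuous hpC hq1 n).comp (KMSAux.continuous_shiftT.iterate n)
  have hE2 : Continuous fun x => ((KMSAux.rop (fun z => ((p z : ℝ) : ℂ)))^[n]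
      (fun y => d y * a y) (shiftT^[n] x)) :=
    (KMSAux.rop_iter_continuous hpC hq2 n).comp (KMSAux.continuous_shiftT.iterate n)
  have hQ1 : ∀ η : Lp ℂ 2 μ, ∀ᵐ x ∂μ, ((Mb * (Mc * MHm)) η) x
      = (b x * (c x * ((hPow H (-β) n x : ℝ) : ℂ))) * η x := by
    intro η
    filter_upwards [hMb ((Mc * MHm) η), hMc (MHm η), hMHm η] with x h1 h2 h3
    simp only [ContinuousLinearMap.mul_apply] at h1 ⊢
    rw [h1, h2, h3]; ring
  have hQ2 : ∀ η : Lp ℂ 2 μ, ∀ᵐ x ∂μ, ((Md * Ma) η) x = (d x * a x) * η x := by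
    intro η
    filter_upwards [hMd (Ma η), hMa η] with x h1 h2
    simp only [ContinuousLinearMap.mul_apply] at h1 ⊢
    rw [h1, h2]; ring
  have hmid1 := KMSAux.enQen μ p hp_cont hint hmapT S hS e he n
    (fun y => b y * (c y * ((hPow H (-β) n y : ℝ) : ℂ))) hq1 (Mb * (Mc * MHm)) hQ1
    (fun x => ((KMSAux.rop (fun z => ((p z : ℝ) : ℂ)))^[n]
      (fun y => b y * (c y * ((hPow H (-β) n y : ℝ) : ℂ))) (shiftT^[n] x))) hE1 rfl
  have hmid2 := KMSAux.enQen μ p hp_cont hint hmapT S hS e he n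
    (fun y => d y * a y) hq2 (Md * Ma) hQ2
    (fun x => ((KMSAux.rop (fun z => ((p z : ℝ) : ℂ)))^[n]
      (fun y => d y * a y) (shiftT^[n] x))) hE2 rfl
  have hop1 : (Ma * e n * Mb) * (Mc * MHm * e n * MHp * Md)
      = (Ma * KMSAux.mulCLM μ _ hE1) * e n * (MHp * Md) := by
    calc (Ma * e n * Mb) * (Mc * MHm * e n * MHp * Md)
        = Ma * (e n * (Mb * (Mc * MHm)) * e n) * (MHp * Md) := by
          simp only [mul_assoc]
      _ = Ma * (KMSAux.mulCLM μ _ hE1 * e n) * (MHp * Md) := by rw [hmid1]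
      _ = (Ma * KMSAux.mulCLM μ _ hE1) * e n * (MHp * Md) := by simp only [mul_assoc]
  have hop2 : (Mc * e n * Md) * (Ma * e n * Mb)
      = (Mc * KMSAux.mulCLM μ _ hE2) * e n * Mb := by
    calc (Mc * e n * Md) * (Ma * e n * Mb)
        = Mc * (e n * (Md * Ma) * e n) * Mb := by simp only [mul_assoc]
      _ = Mc * (KMSAux.mulCLM μ _ hE2 * e n) * Mb := by rw [hmid2]
      _ = (Mc * KMSAux.mulCLM μ _ hE2) * e n * Mb := by simp only [mul_assoc]
  have hMf1 : ∀ η : Lp ℂ 2 μ, ∀ᵐ x ∂μ, ((Ma * KMSAux.mulCLM μ _ hE1) η) x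
      = (a x * ((KMSAux.rop (fun z => ((p z : ℝ) : ℂ)))^[n]
          (fun y => b y * (c y * ((hPow H (-β) n y : ℝ) : ℂ))) (shiftT^[n] x))) * η x := by
    intro η
    filter_upwards [hMa (KMSAux.mulCLM μ _ hE1 η), KMSAux.mulCLM_coe μ _ hE1 η] with x h1 h2
    simp only [ContinuousLinearMap.mul_apply] at h1 ⊢
    rw [h1, h2]; ring
  have hMg1 : ∀ η : Lp ℂ 2 μ, ∀ᵐ x ∂μ, ((MHp * Md) η) x
      = (((hPow H β n x : ℝ) : ℂ) * d x) * η x := by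
    intro η
    filter_upwards [hMHp (Md η), hMd η] with x h1 h2
    simp only [ContinuousLinearMap.mul_apply] at h1 ⊢
    rw [h1, h2]; ring
  have hMf2 : ∀ η : Lp ℂ 2 μ, ∀ᵐ x ∂μ, ((Mc * KMSAux.mulCLM μ _ hE2) η) x
      = (c x * ((KMSAux.rop (fun z => ((p z : ℝ) : ℂ)))^[n]
          (fun y => d y * a y) (shiftT^[n] x))) * η x := by
    intro η
    filter_upwards [hMc (KMSAux.mulCLM μ _ hE2 η), KMSAux.mulCLM_coe μ _ hE2 η] with x h1 h2
    simp only [ContinuousLinearMap.mul_apply] at h1 ⊢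
    rw [h1, h2]; ring
  have hψ1 := hψ
    (fun x => a x * ((KMSAux.rop (fun z => ((p z : ℝ) : ℂ)))^[n]
      (fun y => b y * (c y * ((hPow H (-β) n y : ℝ) : ℂ))) (shiftT^[n] x)))
    (fun x => ((hPow H β n x : ℝ) : ℂ) * d x)
    (ha.mul hE1) (hhp.mul hd) n
    (Ma * KMSAux.mulCLM μ _ hE1) (MHp * Md) hMf1 hMg1
  have hψ2 := hψ
    (fun x => c x * ((KMSAux.rop (fun z => ((p z : ℝ) : ℂ)))^[n]
      (fun y => d y * a y) (shiftT^[n] x)))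
    b (hc.mul hE2) hb n
    (Mc * KMSAux.mulCLM μ _ hE2) Mb hMf2 hMb
  rw [hop1, hop2, hψ1, hψ2]
  exact KMSAux.final_int p H hp_cont hH_cont hH_pos β lamβ hlam ν hν a b c d ha hb hc hd n
end
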